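/- Let A_V be the 3×3 real symmetric matrix with 1 on the diagonal and −1 off the diagonal. Then the norm of A_V as an operator from ℓ^∞(3) to ℓ¹(3) is at least 6, i.e., sup over |z₁|=|z₂|=|z₃|=1 of |Σᵢⱼ (A_V)ᵢⱼ zᵢ z̄ⱼ| = 6. -/

import Mathlib

lemma key8 (z : Fin 3 → ℂ) (h : ∀ i, ‖z i‖ = 1) :
    ∑ i, ∑ j, (if i = j then (1 : ℂ) else -1) * z i * star (z j)
      = 6 - (z 0 + z 1 + z 2) * star (z 0 + z 1 + z 2) := by
  have e : ∀ i, z i * (starRingEnd ℂ) (z i) = 1 := by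
    intro i
    have := Complex.mul_conj (z i)
    rw [Complex.normSq_eq_norm_sq, h i] at this
    simpa using this
  have n01 : ((0:Fin 3) = 1) = False := by decide
  have n02 : ((0:Fin 3) = 2) = False := by decide
  have n10 : ((1:Fin 3) = 0) = False := by decide
  have n12 : ((1:Fin 3) = 2) = False := by decide
  have n20 : ((2:Fin 3) = 0) = False := by decide
  have n21 : ((2:Fin 3) = 1) = False := by decide
  simp only [Fin.sum_univ_three, Complex.star_def, n01, n02, n10, n12, n20, n21,
    if_true, if_false, eq_self_iff_true, map_add]
  have e0 := e 0; have e1 := e 1; have e2 := e 2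
  linear_combination 2 * e0 + 2 * e1 + 2 * e2

lemma unit_aux8 (t : ℝ) (ht : t * t = 3 / 4) : ‖(⟨-1/2, t⟩ : ℂ)‖ = 1 := by
  rw [Complex.norm_def, Complex.normSq_mk,
    show (-1/2 : ℝ) * (-1/2) + t * t = 1 by rw [ht]; norm_num]
  exact Real.sqrt_one

/-- The Varopoulos–Kaijser coefficient matrix `A_V = [[1,−1,−1],[−1,1,−1],[−1,−1,1]]` has
`sup_{|zᵢ|=1} |Σᵢⱼ (A_V)ᵢⱼ zᵢ z̄ⱼ| = 6`; in particular its `ℓ^∞(3) → ℓ¹(3)` norm is ≥ 6. -/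
theorem stmt8 :
    (∀ z : Fin 3 → ℂ, (∀ i, ‖z i‖ = 1) →
        ‖∑ i, ∑ j, (if i = j then (1 : ℂ) else -1) * z i * star (z j)‖ ≤ 6) ∧
      ∃ z : Fin 3 → ℂ, (∀ i, ‖z i‖ = 1) ∧
        ‖∑ i, ∑ j, (if i = j then (1 : ℂ) else -1) * z i * star (z j)‖ = 6 := by
  have h3 : Real.sqrt 3 * Real.sqrt 3 = 3 := Real.mul_self_sqrt (by norm_num)
  constructor
  · intro z h
    rw [key8 z h]
    set s := z 0 + z 1 + z 2 with hs
    have hsn : ‖s‖ ≤ 3 := by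
      calc ‖s‖ ≤ ‖z 0‖ + ‖z 1‖ + ‖z 2‖ :=
            (norm_add_le _ _).trans (by gcongr; exact norm_add_le _ _)
        _ = 3 := by rw [h 0, h 1, h 2]; norm_num
    have hss : s * star s = ((‖s‖ ^ 2 : ℝ) : ℂ) := by
      rw [Complex.star_def, Complex.mul_conj, Complex.normSq_eq_norm_sq]
    have h1 : (0:ℝ) ≤ ‖s‖ ^ 2 := sq_nonneg _
    have h2 : ‖s‖ ^ 2 ≤ 9 := by nlinarith [norm_nonneg s]
    have hcast : ((6:ℂ) - ((‖s‖ ^ 2 : ℝ) : ℂ)) = (((6 - ‖s‖ ^ 2 : ℝ)) : ℂ) := by push_cast; ring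
    rw [hss, hcast, Complex.norm_real, Real.norm_eq_abs]
    rw [abs_le]
    constructor
    · linarith
    · linarith
  · set z : Fin 3 → ℂ := ![1, ⟨-1/2, Real.sqrt 3 / 2⟩, ⟨-1/2, -(Real.sqrt 3 / 2)⟩] with hz
    have h : ∀ i, ‖z i‖ = 1 := by
      intro i
      fin_cases i
      · simp [hz]
      · exact unit_aux8 _ (by nlinarith)
      · exact unit_aux8 _ (by nlinarith)
    refine ⟨z, h, ?_⟩
    rw [key8 z h]
    have hsum : z 0 + z 1 + z 2 = 0 := by
      simp only [hz, Matrix.cons_val_zero, Matrix.cons_val_one, Matrix.head_cons,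
        Matrix.cons_val_two, Matrix.tail_cons]
      apply Complex.ext <;> simp <;> norm_num
    rw [hsum]
    simp
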